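/- Let m, n ≥ 2 and let R_{m,n} be the m×n rectangular band: the semigroup on the set {1,…,m} × {1,…,n} with multiplication (i,j)·(i',j') = (i,j'). Then for every field k the effective dimension of R_{m,n} over k is at least 3; moreover, if |k| ≥ max(m,n) then the effective dimension of R_{m,n} over k equals 3. -/

import Mathlib

/-- The `m × n` rectangular band: the semigroup on `{1,…,m} × {1,…,n}` with
multiplication `(i,j)·(i',j') = (i,j')`. -/
def RectBand (m n : ℕ) : Type := Fin m × Fin n

instance (m n : ℕ) : Mul (RectBand m n) :=
  ⟨fun a b => ((a : Fin m × Fin n).1, (b : Fin m × Fin n).2)⟩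


section EffDimAux

variable {k : Type*} [Field k]

lemma effdim_entry_eq {d : ℕ} {M N : Matrix (Fin d) (Fin d) k} (h : M = N) (i j : Fin d) :
    M i j = N i j := by rw [h]

lemma effdim_nilp_prop (p q : Matrix (Fin 2) (Fin 2) k) (hp2 : p * p = 0) (hq2 : q * q = 0)
    (hpq : p * q = 0) (hp : p ≠ 0) : ∃ c : k, q = c • p := by
  have hp00 := effdim_entry_eq hp2 0 0
  have hp01 := effdim_entry_eq hp2 0 1
  have hp10 := effdim_entry_eq hp2 1 0
  have hp11 := effdim_entry_eq hp2 1 1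
  have hq00 := effdim_entry_eq hq2 0 0
  have hq01 := effdim_entry_eq hq2 0 1
  have hq10 := effdim_entry_eq hq2 1 0
  have hq11 := effdim_entry_eq hq2 1 1
  have e00 := effdim_entry_eq hpq 0 0
  have e01 := effdim_entry_eq hpq 0 1
  have e10 := effdim_entry_eq hpq 1 0
  have e11 := effdim_entry_eq hpq 1 1
  simp only [Matrix.mul_apply, Fin.sum_univ_two, Matrix.zero_apply] at hp00 hp01 hp10 hp11 hq00 hq01 hq10 hq11 e00 e01 e10 e11
  have tp : p 1 1 = - p 0 0 := by
    by_contra h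
    have hs : p 0 0 + p 1 1 ≠ 0 := fun hs => h (by linear_combination hs)
    have hb : p 0 1 = 0 :=
      (mul_eq_zero.mp (show p 0 1 * (p 0 0 + p 1 1) = 0 by linear_combination hp01)).resolve_right hs
    have hc : p 1 0 = 0 :=
      (mul_eq_zero.mp (show p 1 0 * (p 0 0 + p 1 1) = 0 by linear_combination hp10)).resolve_right hs
    have ha : p 0 0 = 0 := by
      have : p 0 0 * p 0 0 = 0 := by linear_combination hp00 - p 1 0 * hb
      exact mul_self_eq_zero.mp this
    have hd : p 1 1 = 0 := by
      have : p 1 1 * p 1 1 = 0 := by linear_combination hp11 - p 0 1 * hc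
      exact mul_self_eq_zero.mp this
    exact hs (by rw [ha, hd, add_zero])
  have tq : q 1 1 = - q 0 0 := by
    by_contra h
    have hs : q 0 0 + q 1 1 ≠ 0 := fun hs => h (by linear_combination hs)
    have hb : q 0 1 = 0 :=
      (mul_eq_zero.mp (show q 0 1 * (q 0 0 + q 1 1) = 0 by linear_combination hq01)).resolve_right hs
    have hc : q 1 0 = 0 :=
      (mul_eq_zero.mp (show q 1 0 * (q 0 0 + q 1 1) = 0 by linear_combination hq10)).resolve_right hs
    have ha : q 0 0 = 0 := by
      have : q 0 0 * q 0 0 = 0 := by linear_combination hq00 - q 1 0 * hb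
      exact mul_self_eq_zero.mp this
    have hd : q 1 1 = 0 := by
      have : q 1 1 * q 1 1 = 0 := by linear_combination hq11 - q 0 1 * hc
      exact mul_self_eq_zero.mp this
    exact hs (by rw [ha, hd, add_zero])
  by_cases hA : p 0 0 = 0
  · have hbc : p 0 1 * p 1 0 = 0 := by linear_combination hp00 - p 0 0 * hA
    by_cases hB : p 0 1 = 0
    · have hC : p 1 0 ≠ 0 := by
        intro h
        apply hp
        ext i j
        fin_cases i <;> fin_cases j <;>
          simp [hA, hB, h, tp]
      have q00z : q 0 0 = 0 := by
        have : p 1 0 * q 0 0 = 0 := by linear_combination e10 - q 1 0 * tp + q 1 0 * hA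
        exact (mul_eq_zero.mp this).resolve_left hC
      have q01z : q 0 1 = 0 := by
        have : p 1 0 * q 0 1 = 0 := by linear_combination e11 - q 1 1 * tp + q 1 1 * hA
        exact (mul_eq_zero.mp this).resolve_left hC
      have q11z : q 1 1 = 0 := by rw [tq, q00z, neg_zero]
      refine ⟨q 1 0 / p 1 0, ?_⟩
      ext i j
      fin_cases i <;> fin_cases j <;>
        simp [hA, hB, q00z, q01z, q11z, tp] <;> field_simp
    · have hC : p 1 0 = 0 := (mul_eq_zero.mp hbc).resolve_left hB
      have q11z : q 1 1 = 0 := by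
        have : p 0 1 * q 1 1 = 0 := by linear_combination e01 - q 0 1 * hA
        exact (mul_eq_zero.mp this).resolve_left hB
      have q00z : q 0 0 = 0 := by linear_combination tq - q11z
      have q10z : q 1 0 = 0 := by
        have : p 0 1 * q 1 0 = 0 := by linear_combination e00 - q 0 0 * hA
        exact (mul_eq_zero.mp this).resolve_left hB
      refine ⟨q 0 1 / p 0 1, ?_⟩
      ext i j
      fin_cases i <;> fin_cases j <;>
        simp [hA, hC, q00z, q10z, q11z, tp] <;> field_simp
  · refine ⟨q 0 0 / p 0 0, ?_⟩
    ext i j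
    fin_cases i <;> fin_cases j <;> simp only [Matrix.smul_apply, smul_eq_mul, Fin.zero_eta, Fin.mk_one, Fin.isValue]
    · field_simp
    · field_simp
      linear_combination e01 - p 0 1 * tq
    · field_simp
      linear_combination q 1 0 * tp - e10
    · field_simp
      linear_combination p 0 0 * tq - q 0 0 * tp

end EffDimAux


/-- For `m, n ≥ 2`, the effective dimension of the `m × n` rectangular band
over any field `k` is at least `3`; moreover if `|k| ≥ max m n` then it equals
`3`. -/

theorem effDim_rectangular_band
    (m n : ℕ) (hm : 2 ≤ m) (hn : 2 ≤ n) (k : Type*) [Field k] :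
    (∀ d ∈ {d : ℕ | ∃ φ : RectBand m n → Matrix (Fin d) (Fin d) k,
        Function.Injective φ ∧
        ∀ s t : RectBand m n, φ (s * t) = φ s * φ t}, 3 ≤ d)
    ∧ (((max m n : ℕ) : Cardinal) ≤ Cardinal.mk k →
        IsLeast {d : ℕ | ∃ φ : RectBand m n → Matrix (Fin d) (Fin d) k,
          Function.Injective φ ∧
          ∀ s t : RectBand m n, φ (s * t) = φ s * φ t} 3) := by
  have h0m : 0 < m := by omega
  have h1m : 1 < m := by omega
  have h0n : 0 < n := by omega
  have h1n : 1 < n := by omega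
  have lb : ∀ d ∈ {d : ℕ | ∃ φ : RectBand m n → Matrix (Fin d) (Fin d) k,
      Function.Injective φ ∧
      ∀ s t : RectBand m n, φ (s * t) = φ s * φ t}, 3 ≤ d := by
    rintro d ⟨φ, hinj, hmul⟩
    by_contra hlt
    push_neg at hlt
    set e00 : RectBand m n := ((⟨0, h0m⟩ : Fin m), (⟨0, h0n⟩ : Fin n)) with he00
    set e01 : RectBand m n := ((⟨0, h0m⟩ : Fin m), (⟨1, h1n⟩ : Fin n)) with he01
    set e10 : RectBand m n := ((⟨1, h1m⟩ : Fin m), (⟨0, h0n⟩ : Fin n)) with he10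
    have hne1 : e00 ≠ e01 := by
      intro h
      have h2 : (⟨0, h0n⟩ : Fin n) = ⟨1, h1n⟩ :=
        congrArg (Prod.snd : Fin m × Fin n → Fin n) h
      simp [Fin.ext_iff] at h2
    have hne2 : e00 ≠ e10 := by
      intro h
      have h2 : (⟨0, h0m⟩ : Fin m) = ⟨1, h1m⟩ :=
        congrArg (Prod.fst : Fin m × Fin n → Fin m) h
      simp [Fin.ext_iff] at h2
    set p := φ e00 - φ e01 with hpdef
    set q := φ e00 - φ e10 with hqdef
    have hp : p ≠ 0 := sub_ne_zero.mpr (fun h => hne1 (hinj h))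
    have hq : q ≠ 0 := sub_ne_zero.mpr (fun h => hne2 (hinj h))
    have hp2 : p * p = 0 := by
      rw [hpdef, sub_mul, mul_sub, mul_sub, ← hmul, ← hmul, ← hmul, ← hmul,
        show e00 * e00 = e00 from rfl, show e00 * e01 = e01 from rfl,
        show e01 * e00 = e00 from rfl, show e01 * e01 = e01 from rfl]
      abel
    have hq2 : q * q = 0 := by
      rw [hqdef, sub_mul, mul_sub, mul_sub, ← hmul, ← hmul, ← hmul, ← hmul,
        show e00 * e00 = e00 from rfl, show e00 * e10 = e00 from rfl,
        show e10 * e00 = e10 from rfl, show e10 * e10 = e10 from rfl]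
      abel
    have hpq : p * q = 0 := by
      rw [hpdef, hqdef, sub_mul, mul_sub, mul_sub, ← hmul, ← hmul, ← hmul, ← hmul,
        show e00 * e00 = e00 from rfl, show e00 * e10 = e00 from rfl,
        show e01 * e00 = e00 from rfl, show e01 * e10 = e00 from rfl]
      abel
    have hap : φ e00 * p = p := by
      rw [hpdef, mul_sub, ← hmul, ← hmul,
        show e00 * e00 = e00 from rfl, show e00 * e01 = e01 from rfl]
    have haq : φ e00 * q = 0 := by
      rw [hqdef, mul_sub, ← hmul, ← hmul,
        show e00 * e00 = e00 from rfl, show e00 * e10 = e00 from rfl]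
      abel
    interval_cases d
    · exact hne1 (hinj (by ext i j; exact i.elim0))
    · have h1 := effdim_entry_eq hpq 0 0
      simp only [Matrix.mul_apply, Fin.sum_univ_one, Matrix.zero_apply] at h1
      rcases mul_eq_zero.mp h1 with h | h
      · apply hp
        ext i j
        fin_cases i <;> fin_cases j <;> exact h
      · apply hq
        ext i j
        fin_cases i <;> fin_cases j <;> exact h
    · obtain ⟨c, hc⟩ := effdim_nilp_prop p q hp2 hq2 hpq hp
      have h2 : φ e00 * q = q := by
        rw [hc, Matrix.mul_smul, hap]
      rw [haq] at h2
      exact hq h2.symm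
  refine ⟨lb, fun hcard => ⟨?_, lb⟩⟩
  have hmk : Nonempty (Fin m ↪ k) := by
    have h1 : Cardinal.mk (ULift (Fin m)) ≤ Cardinal.mk k := by
      rw [Cardinal.mk_uLift, Cardinal.mk_fin, Cardinal.lift_natCast]
      exact le_trans (Nat.cast_le.mpr (le_max_left m n)) hcard
    obtain ⟨e⟩ := Cardinal.le_def _ _ |>.mp h1
    exact ⟨Equiv.ulift.symm.toEmbedding.trans e⟩
  have hnk : Nonempty (Fin n ↪ k) := by
    have h1 : Cardinal.mk (ULift (Fin n)) ≤ Cardinal.mk k := by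
      rw [Cardinal.mk_uLift, Cardinal.mk_fin, Cardinal.lift_natCast]
      exact le_trans (Nat.cast_le.mpr (le_max_right m n)) hcard
    obtain ⟨e⟩ := Cardinal.le_def _ _ |>.mp h1
    exact ⟨Equiv.ulift.symm.toEmbedding.trans e⟩
  obtain ⟨f⟩ := hmk
  obtain ⟨g⟩ := hnk
  refine ⟨fun s : RectBand m n =>
    !![(1 : k), 0, g (s : Fin m × Fin n).2;
       f (s : Fin m × Fin n).1, 0, f (s : Fin m × Fin n).1 * g (s : Fin m × Fin n).2;
       0, 0, 0], ?_, ?_⟩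
  · intro s t h
    have h1 : f (s : Fin m × Fin n).1 = f (t : Fin m × Fin n).1 := by
      have := congrFun (congrFun h 1) 0
      simpa using this
    have h2 : g (s : Fin m × Fin n).2 = g (t : Fin m × Fin n).2 := by
      have := congrFun (congrFun h 0) 2
      simpa using this
    exact Prod.ext (f.injective h1) (g.injective h2)
  · intro s t
    have hst : (s * t : RectBand m n) =
        ((s : Fin m × Fin n).1, (t : Fin m × Fin n).2) := rfl
    rw [hst]
    ext i j
    fin_cases i <;> fin_cases j <;>
      simp [Matrix.mul_apply, Fin.sum_univ_three, Matrix.vecHead, Matrix.vecTail] <;> try ring
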